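/- arXiv:2007.05453 — 5 statements merged into one kernel-verified Lean document; each statement's English description precedes it below -/
import Mathlib

section
/- Let X be a finite data domain, n ≥ 1, and D ∈ X^n. Let Q be a finite class of queries q : X → [0,1] that is closed under negation (for every q ∈ Q, the query x ↦ 1 − q(x) is also in Q). If (D̂, Q̂) ∈ Δ(X) × Δ(Q) is an α-approximate equilibrium of the query release game for D, then the data player's strategy D̂ is 2α-accurate: max_{q ∈ Q} |q(D) − E_{x∼D̂}[q(x)]| ≤ 2α. -/
/-- If `(μ, ν)` is an `α`-approximate equilibrium of the query release
game for the dataset `D`, and the (finite) query class is closed under negation, then the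
data player's mixed strategy `μ` is `2α`-accurate for every query. -/
theorem query_release_equilibrium_accuracy
    {X ι : Type*} [Fintype X] [Nonempty X] [Fintype ι] [Nonempty ι]
    (n : ℕ) (hn : 1 ≤ n) (D : Fin n → X)
    -- the query class, indexed by `ι`, each query taking values in [0,1]
    (q : ι → X → ℝ) (hq : ∀ i x, q i x ∈ Set.Icc (0 : ℝ) 1)
    -- closure under negation
    (hneg : ∀ i : ι, ∃ j : ι, ∀ x, q j x = 1 - q i x)
    -- value of each query on the dataset
    (qD : ι → ℝ) (hqD : ∀ i, qD i = (1 / (n : ℝ)) * ∑ k, q i (D k))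
    -- the payoff of the query release game
    (A : X → ι → ℝ) (hA : ∀ x i, A x i = qD i - q i x)
    -- mixed strategies of the data player and the query player
    (μ : X → ℝ) (hμ0 : ∀ x, 0 ≤ μ x) (hμ1 : ∑ x, μ x = 1)
    (ν : ι → ℝ) (hν0 : ∀ i, 0 ≤ ν i) (hν1 : ∑ i, ν i = 1)
    (α : ℝ)
    -- `(μ, ν)` is an `α`-approximate equilibrium:
    -- `max_q A(μ, q) − α ≤ A(μ, ν) ≤ min_x A(x, ν) + α`
    (heq₁ : ∀ i : ι, (∑ x, μ x * A x i) - α ≤ ∑ x, ∑ i, μ x * ν i * A x i)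
    (heq₂ : ∀ y : X, (∑ x, ∑ i, μ x * ν i * A x i) ≤ (∑ i, ν i * A y i) + α) :
    -- conclusion: `μ` is `2α`-accurate
    ∀ i : ι, |qD i - ∑ x, μ x * q i x| ≤ 2 * α := by
  have hn' : (n : ℝ) ≠ 0 := Nat.cast_ne_zero.mpr (by omega)
  -- the average payoff of the query player against data points `D k` is zero
  have hsum0 : ∑ k : Fin n, ∑ i, ν i * A (D k) i = 0 := by
    rw [Finset.sum_comm]
    have : ∀ i : ι, ∑ k : Fin n, ν i * A (D k) i = 0 := by
      intro i
      simp only [hA, ← Finset.mul_sum]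
      rw [Finset.sum_sub_distrib, Finset.sum_const, Finset.card_univ, Fintype.card_fin, nsmul_eq_mul]
      rw [hqD i]
      field_simp
      ring
    simp [this]
  -- hence some data point has nonpositive payoff
  have ⟨k, hk⟩ : ∃ k : Fin n, ∑ i, ν i * A (D k) i ≤ 0 := by
    by_contra h
    push_neg at h
    have : Nonempty (Fin n) := ⟨⟨0, by omega⟩⟩
    have := Finset.sum_pos (fun k _ => h k) Finset.univ_nonempty
    linarith [hsum0]
  have hAμν : ∑ x, ∑ i, μ x * ν i * A x i ≤ α := by
    have := heq₂ (D k); linarith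
  have key : ∀ i, qD i - ∑ x, μ x * q i x ≤ 2 * α := by
    intro i
    have h1 := heq₁ i
    have h2 : ∑ x, μ x * A x i = qD i - ∑ x, μ x * q i x := by
      simp only [hA, mul_sub]
      rw [Finset.sum_sub_distrib, ← Finset.sum_mul, hμ1, one_mul]
    linarith
  intro i
  obtain ⟨j, hj⟩ := hneg i
  have hqDj : qD j = 1 - qD i := by
    rw [hqD j, hqD i]
    simp only [hj]
    rw [Finset.sum_sub_distrib, Finset.sum_const, Finset.card_univ, Fintype.card_fin, nsmul_eq_mul]
    field_simp
  have hμj : ∑ x, μ x * q j x = 1 - ∑ x, μ x * q i x := by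
    simp only [hj, mul_sub, mul_one]
    rw [Finset.sum_sub_distrib, hμ1]
  have k1 := key i
  have k2 := key j
  rw [hqDj, hμj] at k2
  rw [abs_le]
  constructor <;> linarith
end

section
/- Let X be a finite data domain, D ∈ X^n, Q a finite query class with each q : X → [0,1], ρ > 0, T ∈ ℕ, β ∈ (0,1), and ρ₀ = ρ/T. Consider an adaptive process where, for t = 1, …, T, a distribution D̂^t on X is produced as an arbitrary function of the previously sampled queries q_1, …, q_{t−1}, and then q_t is sampled from the exponential mechanism over Q with score S_t(D, q) = q(D) − E_{x∼D̂^t}[q(x)] (of sensitivity 1/n) and parameter √(2ρ₀), i.e. q_t = q with probability proportional to exp(√(2ρ₀) · n · S_t(D, q)/2). Then with probability at least 1 − β/2, the query player's average regret satisfies (1/T)(max_{q∈Q} Σ_{t=1}^T S_t(D, q) − Σ_{t=1}^T S_t(D, q_t)) ≤ (1/n)·√(2T/ρ)·log(2T|Q|/β). -/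
open Finset

section Aux

variable {ι : Type*} [Fintype ι] [Nonempty ι]

/-- Extend a sequence of length `m` by one element at the end. -/
def extS {ι : Type*} {m : ℕ} (τ : Fin m → ι) (i : ι) : Fin (m + 1) → ι :=
  fun j => if h : (j : ℕ) < m then τ ⟨j, h⟩ else i

lemma extS_lt {ι : Type*} {m : ℕ} (τ : Fin m → ι) (i : ι) (j : Fin (m + 1))
    (h : (j : ℕ) < m) : extS τ i j = τ ⟨j, h⟩ := dif_pos h

lemma extS_last {ι : Type*} {m : ℕ} (τ : Fin m → ι) (i : ι) :
    extS τ i (Fin.last m) = i := dif_neg (lt_irrefl m)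

/-- Splitting off the last coordinate of a sequence. -/
def extEquiv (ι : Type*) (m : ℕ) : ((Fin m → ι) × ι) ≃ (Fin (m + 1) → ι) where
  toFun x := extS x.1 x.2
  invFun σ := (fun k => σ ⟨k, k.2.trans (Nat.lt_succ_self m)⟩, σ (Fin.last m))
  left_inv := by
    rintro ⟨τ, i⟩
    refine Prod.ext (funext fun k => ?_) (extS_last τ i)
    exact dif_pos k.2
  right_inv := by
    intro σ
    funext j
    by_cases h : (j : ℕ) < m
    · exact dif_pos h
    · have hj : j = Fin.last m := Fin.ext (by have h2 := j.isLt; simp only [Fin.val_last]; omega)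
      rw [hj]; exact extS_last _ _

/-- The sequential product measure associated to transition kernels `p`. -/
def seqProd {ι : Type*} [Fintype ι] (p : (m : ℕ) → (Fin m → ι) → ι → ℝ) (m : ℕ)
    (τ : Fin m → ι) : ℝ :=
  ∏ s : Fin m, p s (fun k : Fin (s : ℕ) => τ ⟨k, k.2.trans s.2⟩) (τ s)

variable (p : (m : ℕ) → (Fin m → ι) → ι → ℝ)

lemma seqProd_nonneg (hp : ∀ m h i, 0 ≤ p m h i) (m : ℕ) (τ : Fin m → ι) :
    0 ≤ seqProd p m τ :=
  Finset.prod_nonneg fun _ _ => hp _ _ _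

lemma seqProd_extS (m : ℕ) (τ : Fin m → ι) (i : ι) :
    seqProd p (m + 1) (extS τ i) = seqProd p m τ * p m τ i := by
  unfold seqProd
  rw [Fin.prod_univ_castSucc]
  congr 1
  · refine Finset.prod_congr rfl fun s _ => ?_
    have h1 : (fun k : Fin (s : ℕ) =>
        extS τ i ⟨k, k.2.trans (s.2.trans (Nat.lt_succ_self m))⟩) =
        (fun k : Fin (s : ℕ) => τ ⟨k, k.2.trans s.2⟩) := by
      funext k
      exact dif_pos (k.2.trans s.2)
    show p (s : ℕ) (fun k : Fin (s : ℕ) =>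
        extS τ i ⟨k, k.2.trans (s.2.trans (Nat.lt_succ_self m))⟩)
        (extS τ i (Fin.castSucc s)) = _
    rw [h1]
    congr 1
    exact dif_pos s.2
  · have h1 : (fun k : Fin m => extS τ i ⟨k, k.2.trans (Nat.lt_succ_self m)⟩) = τ := by
      funext k
      exact dif_pos k.2
    show p m (fun k : Fin m => extS τ i ⟨k, k.2.trans (Nat.lt_succ_self m)⟩)
        (extS τ i (Fin.last m)) = _
    rw [h1, extS_last]

lemma seqProd_sum (hp : ∀ m h, ∑ i, p m h i = 1) :
    ∀ m, ∑ τ : Fin m → ι, seqProd p m τ = 1 := by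
  intro m
  induction m with
  | zero => simp [seqProd]
  | succ m ih =>
    rw [← Equiv.sum_comp (extEquiv ι m) (seqProd p (m + 1)), Fintype.sum_prod_type]
    simp only [extEquiv, Equiv.coe_fn_mk, seqProd_extS]
    calc ∑ τ : Fin m → ι, ∑ i, seqProd p m τ * p m τ i
        = ∑ τ : Fin m → ι, seqProd p m τ * ∑ i, p m τ i := by
          simp [Finset.mul_sum]
      _ = ∑ τ : Fin m → ι, seqProd p m τ := by simp [hp]
      _ = 1 := ih

lemma seqProd_marginal (hp : ∀ m h, ∑ i, p m h i = 1) (m : ℕ) (g : (Fin m → ι) → ℝ) :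
    ∀ M (hM : m ≤ M),
      ∑ σ : Fin M → ι,
          seqProd p M σ * g (fun k : Fin m => σ ⟨k, k.2.trans_le hM⟩) =
      ∑ τ : Fin m → ι, seqProd p m τ * g τ := by
  intro M hM
  induction M, hM using Nat.le_induction with
  | base => rfl
  | succ M hM ih =>
    rw [← Equiv.sum_comp (extEquiv ι M)
      (fun σ : Fin (M + 1) → ι =>
        seqProd p (M + 1) σ *
          g (fun k : Fin m => σ ⟨k, k.2.trans_le (hM.trans (Nat.le_succ M))⟩)),
      Fintype.sum_prod_type]
    simp only [extEquiv, Equiv.coe_fn_mk, seqProd_extS]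
    have hre : ∀ (τ : Fin M → ι) (i : ι),
        (fun k : Fin m => extS τ i ⟨k, (k.2.trans_le (hM.trans (Nat.le_succ M)))⟩) =
        (fun k : Fin m => τ ⟨k, k.2.trans_le hM⟩) := by
      intro τ i
      funext k
      exact dif_pos (k.2.trans_le hM)
    calc ∑ τ : Fin M → ι, ∑ i,
          seqProd p M τ * p M τ i *
            g (fun k : Fin m => extS τ i ⟨k, (k.2.trans_le (hM.trans (Nat.le_succ M)))⟩)
        = ∑ τ : Fin M → ι,
            (seqProd p M τ * g (fun k : Fin m => τ ⟨k, k.2.trans_le hM⟩)) * ∑ i, p M τ i := by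
          refine Finset.sum_congr rfl fun τ _ => ?_
          rw [Finset.mul_sum]
          refine Finset.sum_congr rfl fun i _ => ?_
          rw [hre τ i]; ring
      _ = ∑ τ : Fin M → ι,
            seqProd p M τ * g (fun k : Fin m => τ ⟨k, k.2.trans_le hM⟩) := by
          simp [hp]
      _ = _ := ih

end Aux

/-- (Query player's regret via the exponential mechanism.)
In the adaptive process where at each round `t` the data player produces a distribution
`D̂^t` as an arbitrary function of the previously sampled queries, and the query player
samples `q_t` from the exponential mechanism with score
`S_t(D, q) = q(D) − E_{x∼D̂^t}[q(x)]` (sensitivity `1/n`) and parameter `√(2ρ₀)` with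
`ρ₀ = ρ/T`, with probability at least `1 − β/2` the query player's average regret is at
most `(1/n)·√(2T/ρ)·log(2T|Q|/β)`. -/


theorem query_player_regret_exponential_mechanism
    {X ι : Type*} [Fintype X] [Nonempty X] [Fintype ι] [Nonempty ι]
    (n : ℕ) (hn : 1 ≤ n) (D : Fin n → X)
    -- the query class, indexed by `ι`, each query taking values in [0,1]
    (q : ι → X → ℝ) (hq : ∀ i x, q i x ∈ Set.Icc (0 : ℝ) 1)
    (ρ : ℝ) (hρ : 0 < ρ) (T : ℕ) (hT : 1 ≤ T)
    (β : ℝ) (hβ : β ∈ Set.Ioo (0 : ℝ) 1)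
    (ρ₀ : ℝ) (hρ₀ : ρ₀ = ρ / (T : ℝ))
    -- the data player's distribution at round `t`, an arbitrary function of the
    -- previously sampled queries `q_1, …, q_{t−1}`
    (DHat : (t : Fin T) → (Fin (t : ℕ) → ι) → X → ℝ)
    (hDHat0 : ∀ t h x, 0 ≤ DHat t h x)
    (hDHat1 : ∀ t h, ∑ x, DHat t h x = 1)
    -- the score function `S_t(D, q) = q(D) − E_{x∼D̂^t}[q(x)]`
    (S : (t : Fin T) → (Fin (t : ℕ) → ι) → ι → ℝ)
    (hS : ∀ t h i, S t h i =
      (1 / (n : ℝ)) * (∑ k, q i (D k)) - ∑ x, DHat t h x * q i x)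
    -- the exponential mechanism at round `t`: sample `q_t = i` with probability
    -- proportional to `exp(√(2ρ₀)·n·S_t(D, i)/2)`  (sensitivity `1/n`)
    (EM : (t : Fin T) → (Fin (t : ℕ) → ι) → ι → ℝ)
    (hEM : ∀ t h i, EM t h i =
      Real.exp (Real.sqrt (2 * ρ₀) * (n : ℝ) * S t h i / 2) /
        ∑ j, Real.exp (Real.sqrt (2 * ρ₀) * (n : ℝ) * S t h j / 2)) :
    -- with probability at least `1 − β/2` over the sampled query trajectory `σ`,
    -- the query player's average regret is bounded
    (1 : ℝ) - β / 2 ≤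
      ∑ σ ∈ Finset.univ.filter (fun σ : Fin T → ι =>
          ∀ i : ι,
            (1 / (T : ℝ)) *
              ((∑ t : Fin T, S t (fun k : Fin (t : ℕ) => σ ⟨k, k.2.trans t.2⟩) i) -
                ∑ t : Fin T, S t (fun k : Fin (t : ℕ) => σ ⟨k, k.2.trans t.2⟩) (σ t)) ≤
            (1 / (n : ℝ)) * Real.sqrt (2 * (T : ℝ) / ρ) *
              Real.log (2 * (T : ℝ) * (Fintype.card ι : ℝ) / β)),
        ∏ t : Fin T, EM t (fun k : Fin (t : ℕ) => σ ⟨k, k.2.trans t.2⟩) (σ t) := by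
  classical
  have hT0 : 0 < T := hT
  have hTR : (0 : ℝ) < (T : ℝ) := by exact_mod_cast hT0
  have hnR : (0 : ℝ) < (n : ℝ) := by exact_mod_cast hn
  have hn0 : (n : ℝ) ≠ 0 := hnR.ne'
  have hcard : (0 : ℝ) < (Fintype.card ι : ℝ) := by
    exact_mod_cast Fintype.card_pos
  have hβ0 : 0 < β := hβ.1
  have hρ₀pos : 0 < ρ₀ := hρ₀ ▸ div_pos hρ hTR
  set c : ℝ := (1 / (n : ℝ)) * Real.sqrt (2 * (T : ℝ) / ρ) *
      Real.log (2 * (T : ℝ) * (Fintype.card ι : ℝ) / β) with hcdef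
  set L : ℝ := Real.log (2 * (T : ℝ) * (Fintype.card ι : ℝ) / β) with hLdef
  -- normalization of the exponential mechanism
  have hZpos : ∀ (t : Fin T) (h : Fin (t : ℕ) → ι),
      0 < ∑ j, Real.exp (Real.sqrt (2 * ρ₀) * (n : ℝ) * S t h j / 2) :=
    fun t h => Finset.sum_pos (fun j _ => Real.exp_pos _) Finset.univ_nonempty
  have hEMsum : ∀ (t : Fin T) (h : Fin (t : ℕ) → ι), ∑ i, EM t h i = 1 := by
    intro t h
    simp only [hEM]
    rw [← Finset.sum_div]
    exact div_self (hZpos t h).ne'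
  have hEMnn : ∀ (t : Fin T) (h : Fin (t : ℕ) → ι) (i : ι), 0 ≤ EM t h i := by
    intro t h i
    rw [hEM]
    positivity
  -- the exponent identity
  have hsq : Real.sqrt (2 * ρ₀) * Real.sqrt (2 * (T : ℝ) / ρ) = 2 := by
    rw [← Real.sqrt_mul (by positivity)]
    have h4 : (2 * ρ₀) * (2 * (T : ℝ) / ρ) = 4 := by
      rw [hρ₀]; field_simp; ring
    rw [h4, show (4 : ℝ) = 2 ^ 2 by norm_num, Real.sqrt_sq (by norm_num : (0:ℝ) ≤ 2)]
  have hac : Real.sqrt (2 * ρ₀) * (n : ℝ) * c / 2 = L := by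
    rw [hcdef]
    have : Real.sqrt (2 * ρ₀) * (n : ℝ) *
        ((1 / (n : ℝ)) * Real.sqrt (2 * (T : ℝ) / ρ) * L) / 2 =
        (Real.sqrt (2 * ρ₀) * Real.sqrt (2 * (T : ℝ) / ρ)) * ((n : ℝ) * (1 / (n : ℝ))) * L / 2 := by
      ring
    rw [this, mul_one_div, div_self hn0, hsq]
    ring
  -- the per-round exponential-mechanism tail bound
  have key : ∀ (t : Fin T) (h : Fin (t : ℕ) → ι),
      ∑ i, (if ∃ j, c < S t h j - S t h i then EM t h i else 0) ≤ β / (2 * T) := by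
    intro t h
    have hbound : ∀ i, (∃ j, c < S t h j - S t h i) →
        EM t h i ≤ β / (2 * T * (Fintype.card ι : ℝ)) := by
      rintro i ⟨j, hj⟩
      rw [hEM]
      have hnn : (0 : ℝ) ≤ Real.sqrt (2 * ρ₀) * (n : ℝ) := by positivity
      have hSij : S t h i ≤ S t h j - c := by linarith
      have h2 : Real.sqrt (2 * ρ₀) * (n : ℝ) * S t h i ≤
          Real.sqrt (2 * ρ₀) * (n : ℝ) * S t h j -
            Real.sqrt (2 * ρ₀) * (n : ℝ) * c := by
        rw [← mul_sub]
        exact mul_le_mul_of_nonneg_left hSij hnn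
      have he : Real.sqrt (2 * ρ₀) * (n : ℝ) * S t h i / 2 ≤
          Real.sqrt (2 * ρ₀) * (n : ℝ) * S t h j / 2 - L := by
        linarith [hac]
      have hZ : Real.exp (Real.sqrt (2 * ρ₀) * (n : ℝ) * S t h j / 2) ≤
          ∑ j', Real.exp (Real.sqrt (2 * ρ₀) * (n : ℝ) * S t h j' / 2) :=
        Finset.single_le_sum
          (f := fun j' => Real.exp (Real.sqrt (2 * ρ₀) * (n : ℝ) * S t h j' / 2))
          (fun _ _ => (Real.exp_pos _).le) (Finset.mem_univ j)
      calc Real.exp (Real.sqrt (2 * ρ₀) * (n : ℝ) * S t h i / 2) /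
            ∑ j', Real.exp (Real.sqrt (2 * ρ₀) * (n : ℝ) * S t h j' / 2)
          ≤ Real.exp (Real.sqrt (2 * ρ₀) * (n : ℝ) * S t h j / 2 - L) /
            Real.exp (Real.sqrt (2 * ρ₀) * (n : ℝ) * S t h j / 2) :=
            div_le_div₀ (Real.exp_pos _).le (Real.exp_le_exp.2 he) (Real.exp_pos _) hZ
        _ = Real.exp (-L) := by
            rw [← Real.exp_sub]
            congr 1
            ring
        _ = β / (2 * T * (Fintype.card ι : ℝ)) := by
            rw [hLdef, Real.exp_neg, Real.exp_log (by positivity)]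
            rw [inv_div]
    calc ∑ i, (if ∃ j, c < S t h j - S t h i then EM t h i else 0)
        ≤ ∑ _i : ι, β / (2 * T * (Fintype.card ι : ℝ)) := by
          refine Finset.sum_le_sum fun i _ => ?_
          split_ifs with hbad
          · exact hbound i hbad
          · positivity
      _ = β / (2 * T) := by
          rw [Finset.sum_const, Finset.card_univ, nsmul_eq_mul]
          field_simp
  -- the transition kernel: the exponential mechanism, extended trivially beyond `T`
  set p : (m : ℕ) → (Fin m → ι) → ι → ℝ := fun m h i =>
    if hm : m < T then EM ⟨m, hm⟩ h i else if i = Classical.arbitrary ι then 1 else 0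
    with hpdef
  have hp1 : ∀ m h, ∑ i, p m h i = 1 := by
    intro m h
    by_cases hm : m < T
    · simp only [hpdef, dif_pos hm]
      exact hEMsum ⟨m, hm⟩ h
    · simp only [hpdef, dif_neg hm]
      simp
  have hp0 : ∀ m h i, 0 ≤ p m h i := by
    intro m h i
    simp only [hpdef]
    split_ifs
    · exact hEMnn _ _ _
    · norm_num
    · norm_num
  have hPfull : ∀ σ : Fin T → ι,
      (∏ t : Fin T, EM t (fun k : Fin (t : ℕ) => σ ⟨k, k.2.trans t.2⟩) (σ t)) =
        seqProd p T σ := by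
    intro σ
    unfold seqProd
    refine Finset.prod_congr rfl fun t _ => ?_
    simp only [hpdef]
    rw [dif_pos t.2]
  have hMt : ∀ t : Fin T, (t : ℕ) + 1 ≤ T := fun t => t.2
  -- the "good" trajectories: per-round regret at most `c`
  set Good : (Fin T → ι) → Prop := fun σ => ∀ (t : Fin T) (j : ι),
      S t (fun k : Fin (t : ℕ) => σ ⟨k, k.2.trans t.2⟩) j -
        S t (fun k : Fin (t : ℕ) => σ ⟨k, k.2.trans t.2⟩) (σ t) ≤ c
    with hGooddef
  -- per-round bad-event indicator
  set G : (t : Fin T) → (Fin ((t : ℕ) + 1) → ι) → ℝ := fun t τ =>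
      if ∃ j, c < S t (fun k : Fin (t : ℕ) => τ ⟨k, Nat.lt_succ_of_lt k.2⟩) j -
          S t (fun k : Fin (t : ℕ) => τ ⟨k, Nat.lt_succ_of_lt k.2⟩) (τ (Fin.last (t : ℕ)))
      then (1 : ℝ) else 0
    with hGdef
  have hGnn : ∀ t τ, 0 ≤ G t τ := by
    intro t τ
    simp only [hGdef]
    split_ifs <;> norm_num
  -- the per-round bad event has probability at most `β/(2T)`
  have h6 : ∀ t : Fin T,
      ∑ σ : Fin T → ι, seqProd p T σ *
        G t (fun k : Fin ((t : ℕ) + 1) => σ ⟨k, k.2.trans_le (hMt t)⟩) ≤ β / (2 * T) := by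
    intro t
    rw [seqProd_marginal p hp1 ((t : ℕ) + 1) (G t) T (hMt t)]
    rw [← Equiv.sum_comp (extEquiv ι (t : ℕ))
        (fun τ : Fin ((t : ℕ) + 1) → ι => seqProd p ((t : ℕ) + 1) τ * G t τ),
      Fintype.sum_prod_type]
    simp only [extEquiv, Equiv.coe_fn_mk, seqProd_extS]
    have hrest : ∀ (h : Fin (t : ℕ) → ι) (i : ι),
        (fun k : Fin (t : ℕ) => extS h i ⟨k, Nat.lt_succ_of_lt k.2⟩) = h := by
      intro h i
      funext k
      exact dif_pos k.2
    calc ∑ h : Fin (t : ℕ) → ι, ∑ i,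
            seqProd p (t : ℕ) h * p (t : ℕ) h i * G t (extS h i)
        ≤ ∑ h : Fin (t : ℕ) → ι, seqProd p (t : ℕ) h * (β / (2 * T)) := by
          refine Finset.sum_le_sum fun h _ => ?_
          have hval : ∑ i, seqProd p (t : ℕ) h * p (t : ℕ) h i * G t (extS h i)
              = seqProd p (t : ℕ) h *
                ∑ i, (if ∃ j, c < S t h j - S t h i then EM t h i else 0) := by
            rw [Finset.mul_sum]
            refine Finset.sum_congr rfl fun i _ => ?_
            have hpEM : p (t : ℕ) h i = EM t h i := by
              simp only [hpdef]
              rw [dif_pos t.2]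
            have hG' : G t (extS h i) =
                if ∃ j, c < S t h j - S t h i then (1 : ℝ) else 0 := by
              simp only [hGdef]
              rw [hrest h i, extS_last]
            rw [hpEM, hG']
            split_ifs <;> ring
          rw [hval]
          exact mul_le_mul_of_nonneg_left (key t h) (seqProd_nonneg p hp0 _ h)
      _ = β / (2 * T) := by
          rw [← Finset.sum_mul, seqProd_sum p hp1]
          ring
  -- a bad trajectory has at least one bad round
  have hind : ∀ σ : Fin T → ι, ¬ Good σ →
      (1 : ℝ) ≤ ∑ t : Fin T,
        G t (fun k : Fin ((t : ℕ) + 1) => σ ⟨k, k.2.trans_le (hMt t)⟩) := by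
    intro σ hσ
    simp only [hGooddef, not_forall, not_le] at hσ
    obtain ⟨t, j, hj⟩ := hσ
    have h1 : G t (fun k : Fin ((t : ℕ) + 1) => σ ⟨k, k.2.trans_le (hMt t)⟩) = 1 := by
      simp only [hGdef]
      exact if_pos ⟨j, hj⟩
    calc (1 : ℝ) = G t (fun k : Fin ((t : ℕ) + 1) => σ ⟨k, k.2.trans_le (hMt t)⟩) :=
          h1.symm
      _ ≤ ∑ t : Fin T,
          G t (fun k : Fin ((t : ℕ) + 1) => σ ⟨k, k.2.trans_le (hMt t)⟩) :=
          Finset.single_le_sum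
            (f := fun t : Fin T =>
              G t (fun k : Fin ((t : ℕ) + 1) => σ ⟨k, k.2.trans_le (hMt t)⟩))
            (fun t' _ => hGnn t' (fun k : Fin ((t' : ℕ) + 1) => σ ⟨k, k.2.trans_le (hMt t')⟩))
            (Finset.mem_univ t)
  -- union bound: bad trajectories have probability at most `β/2`
  have hbadle : ∑ σ ∈ Finset.univ.filter (fun σ => ¬ Good σ), seqProd p T σ ≤ β / 2 := by
    calc ∑ σ ∈ Finset.univ.filter (fun σ => ¬ Good σ), seqProd p T σ
        ≤ ∑ σ ∈ Finset.univ.filter (fun σ => ¬ Good σ), seqProd p T σ *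
            ∑ t : Fin T,
              G t (fun k : Fin ((t : ℕ) + 1) => σ ⟨k, k.2.trans_le (hMt t)⟩) := by
          refine Finset.sum_le_sum fun σ hσ => ?_
          exact le_mul_of_one_le_right (seqProd_nonneg p hp0 _ _)
            (hind σ (Finset.mem_filter.1 hσ).2)
      _ ≤ ∑ σ : Fin T → ι, seqProd p T σ *
            ∑ t : Fin T,
              G t (fun k : Fin ((t : ℕ) + 1) => σ ⟨k, k.2.trans_le (hMt t)⟩) := by
          refine Finset.sum_le_sum_of_subset_of_nonneg (Finset.filter_subset _ _)
            fun σ _ _ => ?_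
          exact mul_nonneg (seqProd_nonneg p hp0 _ _)
            (Finset.sum_nonneg fun t _ => hGnn t (fun k : Fin ((t : ℕ) + 1) => σ ⟨k, k.2.trans_le (hMt t)⟩))
      _ = ∑ t : Fin T, ∑ σ : Fin T → ι, seqProd p T σ *
            G t (fun k : Fin ((t : ℕ) + 1) => σ ⟨k, k.2.trans_le (hMt t)⟩) := by
          simp only [Finset.mul_sum]
          exact Finset.sum_comm
      _ ≤ ∑ t : Fin T, β / (2 * T) := Finset.sum_le_sum fun t _ => h6 t
      _ = β / 2 := by
          rw [Finset.sum_const, Finset.card_univ, Fintype.card_fin, nsmul_eq_mul]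
          field_simp
  have hsplit := Finset.sum_filter_add_sum_filter_not Finset.univ Good (seqProd p T)
  have hone := seqProd_sum p hp1 T
  -- good trajectories satisfy the average-regret bound
  refine le_trans ?_ (Finset.sum_le_sum_of_subset_of_nonneg
    (s := Finset.univ.filter Good) ?_ ?_)
  · have hconv : ∑ σ ∈ Finset.univ.filter Good,
        (∏ t : Fin T, EM t (fun k : Fin (t : ℕ) => σ ⟨k, k.2.trans t.2⟩) (σ t)) =
        ∑ σ ∈ Finset.univ.filter Good, seqProd p T σ :=
      Finset.sum_congr rfl fun σ _ => hPfull σ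
    rw [hconv]
    linarith
  · intro σ hσ
    have hσ' : Good σ := (Finset.mem_filter.1 hσ).2
    simp only [hGooddef] at hσ'
    simp only [Finset.mem_filter, Finset.mem_univ, true_and]
    intro i
    have hsum : ∑ t : Fin T,
        (S t (fun k : Fin (t : ℕ) => σ ⟨k, k.2.trans t.2⟩) i -
          S t (fun k : Fin (t : ℕ) => σ ⟨k, k.2.trans t.2⟩) (σ t)) ≤ (T : ℝ) * c := by
      calc ∑ t : Fin T,
            (S t (fun k : Fin (t : ℕ) => σ ⟨k, k.2.trans t.2⟩) i -
              S t (fun k : Fin (t : ℕ) => σ ⟨k, k.2.trans t.2⟩) (σ t))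
          ≤ ∑ _t : Fin T, c := Finset.sum_le_sum fun t _ => hσ' t i
        _ = (T : ℝ) * c := by
            rw [Finset.sum_const, Finset.card_univ, Fintype.card_fin, nsmul_eq_mul]
    rw [← Finset.sum_sub_distrib]
    calc (1 / (T : ℝ)) * ∑ t : Fin T,
          (S t (fun k : Fin (t : ℕ) => σ ⟨k, k.2.trans t.2⟩) i -
            S t (fun k : Fin (t : ℕ) => σ ⟨k, k.2.trans t.2⟩) (σ t))
        ≤ (1 / (T : ℝ)) * ((T : ℝ) * c) :=
          mul_le_mul_of_nonneg_left hsum (by positivity)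
      _ = c := by field_simp
  · intro σ _ _
    exact Finset.prod_nonneg fun t _ => hEMnn _ _ _
end

section
/- Let γ > 0 and s > 0 be real numbers, and let p, p′ be real numbers with 0 < p ≤ e^{−γ}, 0 < p′ ≤ e^{−γ}, and p ≥ e^{−s}·p′. Then (1 − p)/(1 − p′) ≤ 1 + (1 − e^{−s})/(e^{γ} − 1) ≤ e^{s/γ}. -/
/-- (Key inequality for the rejection-event privacy loss.)
If `0 < p ≤ e^{−γ}`, `0 < p′ ≤ e^{−γ}` and `p ≥ e^{−s}·p′`, then
`(1 − p)/(1 − p′) ≤ 1 + (1 − e^{−s})/(e^{γ} − 1) ≤ e^{s/γ}`. -/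
theorem rejection_event_inequality
    (γ s p p' : ℝ) (hγ : 0 < γ) (hs : 0 < s)
    (hp0 : 0 < p) (hp1 : p ≤ Real.exp (-γ))
    (hp'0 : 0 < p') (hp'1 : p' ≤ Real.exp (-γ))
    (hratio : Real.exp (-s) * p' ≤ p) :
    (1 - p) / (1 - p') ≤ 1 + (1 - Real.exp (-s)) / (Real.exp γ - 1) ∧
      1 + (1 - Real.exp (-s)) / (Real.exp γ - 1) ≤ Real.exp (s / γ) := by
  have hA : Real.exp (-γ) < 1 := by
    rw [Real.exp_lt_one_iff]; linarith
  have hE : 1 < Real.exp γ := by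
    rw [Real.one_lt_exp_iff]; exact hγ
  have hp'lt : p' < 1 := lt_of_le_of_lt hp'1 hA
  have h1p' : 0 < 1 - p' := by linarith
  have hEs : Real.exp (-s) < 1 := by rw [Real.exp_lt_one_iff]; linarith
  have hmul : p' * Real.exp γ ≤ 1 := by
    have := mul_le_mul_of_nonneg_right hp'1 (le_of_lt (Real.exp_pos γ))
    rwa [← Real.exp_add, neg_add_cancel, Real.exp_zero] at this
  set c := (1 - Real.exp (-s)) / (Real.exp γ - 1) with hc
  have hcE : c * (Real.exp γ - 1) = 1 - Real.exp (-s) := by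
    rw [hc, div_mul_eq_mul_div, mul_div_assoc, div_self (by linarith : Real.exp γ - 1 ≠ 0), mul_one]
  have hc0 : 0 ≤ c := by
    apply div_nonneg <;> linarith
  constructor
  · rw [div_le_iff₀ h1p']
    nlinarith [mul_le_mul_of_nonneg_left hmul hc0]
  · have h1 : 1 - Real.exp (-s) ≤ s := by
      nlinarith [Real.add_one_le_exp (-s)]
    have h2 : γ ≤ Real.exp γ - 1 := by
      nlinarith [Real.add_one_le_exp γ]
    have h3 : c ≤ s / γ := by
      apply div_le_div₀ (le_of_lt hs) h1 hγ h2
    nlinarith [Real.add_one_le_exp (s / γ)]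
end

section
/- Let M be a mechanism from datasets D ∈ X^n (X a finite domain) to probability distributions on a finite set R. If M satisfies pure ε-differential privacy, i.e. for all neighboring datasets D, D′ (differing in one entry) and all r ∈ R, M(D)(r) ≤ e^ε · M(D′)(r), then M satisfies (ε²/2)-zCDP: for all neighboring D, D′ and all α > 1, D_α(M(D) ‖ M(D′)) ≤ (ε²/2)·α. -/
open Real

lemma aux_sinh_le (x : ℝ) (hx : 0 ≤ x) : Real.sinh x ≤ x * Real.cosh x := by
  have hder : ∀ y : ℝ, HasDerivAt (fun x : ℝ => x * Real.cosh x - Real.sinh x)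
      (1 * Real.cosh y + y * Real.sinh y - Real.cosh y) y := fun y =>
    ((hasDerivAt_id' y).mul (Real.hasDerivAt_cosh y)).sub (Real.hasDerivAt_sinh y)
  have hmono : MonotoneOn (fun x : ℝ => x * Real.cosh x - Real.sinh x) (Set.Ici 0) := by
    apply monotoneOn_of_deriv_nonneg (convex_Ici 0)
    · exact (fun y _ => (hder y).differentiableAt.continuousAt.continuousWithinAt)
    · exact fun y _ => (hder y).differentiableAt.differentiableWithinAt
    · intro y hy
      rw [interior_Ici] at hy
      rw [(hder y).deriv]
      have hy' : (0:ℝ) < y := hy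
      have hsy : 0 ≤ Real.sinh y := Real.sinh_nonneg_iff.mpr hy'.le
      nlinarith [mul_nonneg hy'.le hsy]
  have h0 := hmono (Set.self_mem_Ici) (Set.mem_Ici.mpr hx) hx
  simp only [zero_mul, Real.sinh_zero, sub_zero, zero_sub] at h0
  linarith

lemma aux_cosh_le (u s : ℝ) (hu : 0 ≤ u) (hs : 1 ≤ s) :
    Real.cosh (s * u) ≤ Real.cosh u * Real.exp (u ^ 2 * (s ^ 2 - 1) / 2) := by
  have hder : ∀ y : ℝ, HasDerivAt (fun x : ℝ => x * x / 2 - Real.log (Real.cosh x))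
      ((1 * y + y * 1) / 2 - Real.sinh y / Real.cosh y) y := fun y =>
    (((hasDerivAt_id' y).mul (hasDerivAt_id' y)).div_const 2).sub
      ((Real.hasDerivAt_cosh y).log (Real.cosh_pos y).ne')
  have hmono : MonotoneOn (fun x : ℝ => x * x / 2 - Real.log (Real.cosh x)) (Set.Ici 0) := by
    apply monotoneOn_of_deriv_nonneg (convex_Ici 0)
    · exact (fun y _ => (hder y).differentiableAt.continuousAt.continuousWithinAt)
    · exact fun y _ => (hder y).differentiableAt.differentiableWithinAt
    · intro y hy
      rw [interior_Ici] at hy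
      rw [(hder y).deriv]
      have hy' : (0:ℝ) < y := hy
      have h1 := aux_sinh_le y hy'.le
      have h2 := Real.cosh_pos y
      rw [sub_nonneg, div_le_iff₀ h2]
      nlinarith
  have hle : u ≤ s * u := le_mul_of_one_le_left hu hs
  have h0 := hmono (Set.mem_Ici.mpr hu) (Set.mem_Ici.mpr (hu.trans hle)) hle
  have hcu := Real.cosh_pos u
  have hcsu := Real.cosh_pos (s * u)
  have hlog : Real.log (Real.cosh (s * u)) ≤ Real.log (Real.cosh u) + u ^ 2 * (s ^ 2 - 1) / 2 := by
    simp only at h0; nlinarith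
  calc Real.cosh (s * u) = Real.exp (Real.log (Real.cosh (s * u))) := (Real.exp_log hcsu).symm
    _ ≤ Real.exp (Real.log (Real.cosh u) + u ^ 2 * (s ^ 2 - 1) / 2) := Real.exp_le_exp.mpr hlog
    _ = Real.cosh u * Real.exp (u ^ 2 * (s ^ 2 - 1) / 2) := by
        rw [Real.exp_add, Real.exp_log hcu]

lemma aux_scalar (ε α : ℝ) (hε : 0 < ε) (hα : 1 < α) :
    (Real.exp ε - 1) * Real.exp (-(ε * α)) + (1 - Real.exp (-ε)) * Real.exp (ε * α) ≤
      (Real.exp ε - Real.exp (-ε)) * Real.exp (ε ^ 2 / 2 * α * (α - 1)) := by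
  have h := aux_cosh_le (ε / 2) (2 * α - 1) (by linarith) (by linarith)
  have hexp : (ε / 2) ^ 2 * ((2 * α - 1) ^ 2 - 1) / 2 = ε ^ 2 / 2 * α * (α - 1) := by ring
  rw [hexp] at h
  set a := Real.exp (ε / 2) with ha
  set b := Real.exp (ε * α) with hb
  set E := Real.exp (ε ^ 2 / 2 * α * (α - 1)) with hE
  have ha0 : 0 < a := Real.exp_pos _
  have hb0 : 0 < b := Real.exp_pos _
  have hE0 : 0 < E := Real.exp_pos _
  have ha1 : 1 < a := by
    have := Real.exp_lt_exp.mpr (show (0:ℝ) < ε / 2 by linarith)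
    rwa [Real.exp_zero] at this
  have hea : Real.exp ε = a * a := by rw [ha, ← Real.exp_add]; ring_nf
  have hene : Real.exp (-ε) = (a * a)⁻¹ := by rw [Real.exp_neg, hea]
  have henb : Real.exp (-(ε * α)) = b⁻¹ := by rw [Real.exp_neg]
  have hcosh1 : Real.cosh ((2 * α - 1) * (ε / 2)) = (b / a + a / b) / 2 := by
    rw [Real.cosh_eq, hb, ha, ← Real.exp_sub, ← Real.exp_sub]
    ring_nf
  have hcosh2 : Real.cosh (ε / 2) = (a + a⁻¹) / 2 := by
    rw [Real.cosh_eq, Real.exp_neg]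
  rw [hcosh1, hcosh2] at h
  rw [hea, hene, henb]
  have h2 : b / a + a / b ≤ (a + a⁻¹) * E := by linarith
  have h' : b * b + a * a ≤ (a * a + 1) * E * b := by
    have h3 := mul_le_mul_of_nonneg_right h2 (by positivity : (0:ℝ) ≤ a * b)
    have e1 : (b / a + a / b) * (a * b) = b * b + a * a := by field_simp
    have e2 : (a + a⁻¹) * E * (a * b) = (a * a + 1) * E * b := by field_simp
    rwa [e1, e2] at h3
  have hfac : (0:ℝ) ≤ a * a - 1 := by nlinarith
  have key := mul_le_mul_of_nonneg_left h' hfac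
  have e3 : (a * a - 1) * b⁻¹ + (1 - (a * a)⁻¹) * b = (a * a - 1) * (b * b + a * a) / (a * a * b) := by
    field_simp; ring
  have e4 : (a * a - (a * a)⁻¹) * E = (a * a - 1) * ((a * a + 1) * E * b) / (a * a * b) := by
    field_simp; ring
  rw [e3, e4]
  gcongr

/-- (Pure DP implies zCDP, Bun–Steinke.)
If a mechanism `M` from datasets to distributions on a finite set satisfies pure
`ε`-differential privacy, then it satisfies `(ε²/2)`-zCDP: for all neighboring datasets
and all Rényi orders `α > 1`,
`D_α(M(D) ‖ M(D′)) = (α−1)⁻¹ log Σ_r M(D)(r)^α M(D′)(r)^{1−α} ≤ (ε²/2)·α`. -/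
theorem pureDP_implies_zCDP
    {X R : Type*} [Fintype X] [Fintype R]
    (n : ℕ) (hn : 1 ≤ n) (ε : ℝ)
    (M : (Fin n → X) → R → ℝ)
    (hM0 : ∀ D r, 0 ≤ M D r) (hM1 : ∀ D, ∑ r, M D r = 1)
    -- pure `ε`-differential privacy
    (hDP : ∀ D D' : Fin n → X, (∃ i, ∀ j, j ≠ i → D j = D' j) →
      ∀ r, M D r ≤ Real.exp ε * M D' r) :
    -- `(ε²/2)`-zCDP
    ∀ D D' : Fin n → X, (∃ i, ∀ j, j ≠ i → D j = D' j) →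
      ∀ α : ℝ, 1 < α →
        (α - 1)⁻¹ * Real.log (∑ r, M D r ^ α * M D' r ^ (1 - α)) ≤ ε ^ 2 / 2 * α := by
  intro D D' hN α hα
  have hα0 : α ≠ 0 := by linarith
  have hα1 : (0:ℝ) < α - 1 := by linarith
  have hεnn : 0 ≤ ε := by
    have hpos : ∃ r ∈ Finset.univ, (0:ℝ) < M D r := by
      apply Finset.exists_lt_of_sum_lt
      rw [hM1 D, Finset.sum_const_zero]
      norm_num
    obtain ⟨r₀, _, hr₀⟩ := hpos
    have hself := hDP D D ⟨⟨0, hn⟩, fun j _ => rfl⟩ r₀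
    have h1e : 1 ≤ Real.exp ε := by nlinarith
    exact Real.one_le_exp_iff.mp h1e
  have hsym : ∃ i, ∀ j, j ≠ i → D' j = D j := by
    obtain ⟨i, hi⟩ := hN; exact ⟨i, fun j hj => (hi j hj).symm⟩
  have hPQ := hDP D D' hN
  have hQP := hDP D' D hsym
  have hsum_nonneg : (0:ℝ) ≤ ∑ r, M D r ^ α * M D' r ^ (1 - α) :=
    Finset.sum_nonneg fun r _ =>
      mul_nonneg (Real.rpow_nonneg (hM0 D r) α) (Real.rpow_nonneg (hM0 D' r) _)
  rcases eq_or_lt_of_le hεnn with hε0 | hεpos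
  · -- case ε = 0
    have hε0' : ε = 0 := hε0.symm
    subst hε0'
    simp only [Real.exp_zero, one_mul] at hPQ hQP
    have hle1 : ∑ r, M D r ^ α * M D' r ^ (1 - α) ≤ 1 := by
      have hstep : ∀ r, M D r ^ α * M D' r ^ (1 - α) ≤ M D r := by
        intro r
        rw [← le_antisymm (hPQ r) (hQP r)]
        rcases eq_or_lt_of_le (hM0 D r) with h0 | h0
        · rw [← h0, Real.zero_rpow hα0, zero_mul]
        · rw [← Real.rpow_add h0]
          norm_num
      calc ∑ r, M D r ^ α * M D' r ^ (1 - α) ≤ ∑ r, M D r :=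
            Finset.sum_le_sum fun r _ => hstep r
        _ = 1 := hM1 D
    have hlog := Real.log_nonpos hsum_nonneg hle1
    have hfin : (α - 1)⁻¹ * Real.log (∑ r, M D r ^ α * M D' r ^ (1 - α)) ≤ 0 :=
      mul_nonpos_iff.mpr (Or.inl ⟨by positivity, hlog⟩)
    calc (α - 1)⁻¹ * Real.log (∑ r, M D r ^ α * M D' r ^ (1 - α)) ≤ 0 := hfin
      _ ≤ (0:ℝ) ^ 2 / 2 * α := by norm_num
  · -- case ε > 0
    set L := Real.exp (-ε) with hL
    set U := Real.exp ε with hU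
    have hL0 : 0 < L := Real.exp_pos _
    have hU0 : 0 < U := Real.exp_pos _
    have hLU : L < U := Real.exp_lt_exp.mpr (by linarith)
    have hULpos : 0 < U - L := by linarith
    have hLU1 : L * U = 1 := by rw [hL, hU, ← Real.exp_add]; norm_num
    have hLa : L ^ α = Real.exp (-(ε * α)) := by
      rw [hL, ← Real.exp_mul]; ring_nf
    have hUa : U ^ α = Real.exp (ε * α) := by rw [hU, ← Real.exp_mul]
    have claim : ∀ r, M D r ^ α * M D' r ^ (1 - α) ≤
        ((U * M D' r - M D r) * L ^ α + (M D r - L * M D' r) * U ^ α) / (U - L) := by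
      intro r
      rcases eq_or_lt_of_le (hM0 D' r) with hq0 | hq0
      · have hp0 : M D r = 0 := le_antisymm
          (by have := hPQ r; rw [← hq0] at this; simpa using this) (hM0 D r)
        rw [hp0, ← hq0, Real.zero_rpow hα0, zero_mul]
        norm_num
      · set q := M D' r with hqd
        set p := M D r with hpd
        have hp0 : 0 ≤ p := hM0 D r
        have hxU : p ≤ U * q := hPQ r
        have hxL : L * q ≤ p := by
          have h5 : q ≤ U * p := hQP r
          nlinarith
        set x := p / q with hx
        have hpx : p = q * x := by rw [hx]; field_simp
        have hx0 : 0 ≤ x := div_nonneg hp0 hq0.le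
        have hxLx : L ≤ x := (le_div_iff₀ hq0).mpr (by linarith)
        have hxUx : x ≤ U := (div_le_iff₀ hq0).mpr (by linarith)
        set θ := (U - x) / (U - L) with hθ
        have hθ0 : 0 ≤ θ := div_nonneg (by linarith) hULpos.le
        have hθ1 : 0 ≤ 1 - θ := by
          rw [hθ, sub_nonneg, div_le_one hULpos]; linarith
        have hscomb : θ * L + (1 - θ) * U = x := by
          rw [hθ]; field_simp; ring
        have hconv := (convexOn_rpow hα.le).2 (Set.mem_Ici.mpr hL0.le)
          (Set.mem_Ici.mpr hU0.le) hθ0 hθ1 (by ring : θ + (1 - θ) = 1)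
        simp only [smul_eq_mul] at hconv
        rw [hscomb] at hconv
        have hq' : q ^ α * q ^ (1 - α) = q := by
          rw [← Real.rpow_add hq0]; norm_num
        have hLHS : p ^ α * q ^ (1 - α) = q * x ^ α := by
          calc p ^ α * q ^ (1 - α) = (q * x) ^ α * q ^ (1 - α) := by rw [← hpx]
            _ = q ^ α * x ^ α * q ^ (1 - α) := by rw [Real.mul_rpow hq0.le hx0]
            _ = q ^ α * q ^ (1 - α) * x ^ α := by ring
            _ = q * x ^ α := by rw [hq']
        calc p ^ α * q ^ (1 - α) = q * x ^ α := hLHS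
          _ ≤ q * (θ * L ^ α + (1 - θ) * U ^ α) := by
              exact mul_le_mul_of_nonneg_left hconv hq0.le
          _ = ((U * q - p) * L ^ α + (p - L * q) * U ^ α) / (U - L) := by
              rw [hθ, hpx]; field_simp; ring
    have hsum1 : ∑ r, M D r ^ α * M D' r ^ (1 - α) ≤
        ((U - 1) * L ^ α + (1 - L) * U ^ α) / (U - L) := by
      calc ∑ r, M D r ^ α * M D' r ^ (1 - α)
          ≤ ∑ r, ((U * M D' r - M D r) * L ^ α + (M D r - L * M D' r) * U ^ α) / (U - L) :=
            Finset.sum_le_sum fun r _ => claim r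
        _ = (∑ r, ((U * L ^ α - L * U ^ α) * M D' r + (U ^ α - L ^ α) * M D r)) / (U - L) := by
            rw [← Finset.sum_div]
            congr 1
            exact Finset.sum_congr rfl fun r _ => by ring
        _ = ((U * L ^ α - L * U ^ α) * 1 + (U ^ α - L ^ α) * 1) / (U - L) := by
            rw [Finset.sum_add_distrib, ← Finset.mul_sum, ← Finset.mul_sum, hM1, hM1]
        _ = ((U - 1) * L ^ α + (1 - L) * U ^ α) / (U - L) := by ring
    have hkey : ∑ r, M D r ^ α * M D' r ^ (1 - α) ≤ Real.exp (ε ^ 2 / 2 * α * (α - 1)) := by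
      refine hsum1.trans ?_
      rw [div_le_iff₀ hULpos]
      have hs := aux_scalar ε α hεpos hα
      rw [hLa, hUa, hL, hU]
      nlinarith [hs]
    rcases eq_or_lt_of_le hsum_nonneg with hS0 | hS0
    · rw [← hS0, Real.log_zero, mul_zero]
      positivity
    · have hlog := Real.log_le_log hS0 hkey
      rw [Real.log_exp] at hlog
      have h2 := mul_le_mul_of_nonneg_left hlog (inv_nonneg.mpr hα1.le)
      calc (α - 1)⁻¹ * Real.log (∑ r, M D r ^ α * M D' r ^ (1 - α))
          ≤ (α - 1)⁻¹ * (ε ^ 2 / 2 * α * (α - 1)) := h2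
        _ = ε ^ 2 / 2 * α := by field_simp
end

section
/- Let M be a mechanism from datasets D ∈ X^n (X a finite domain) to probability distributions on a finite set R, and suppose M satisfies ρ-zCDP: for all neighboring datasets D, D′ (differing in one entry) and all α > 1, D_α(M(D) ‖ M(D′)) ≤ ρα. Then for every δ ∈ (0,1), M satisfies (ρ + 2√(ρ·log(1/δ)), δ)-differential privacy: for all neighboring D, D′ and every set S ⊆ R, Pr[M(D) ∈ S] ≤ e^{ρ + 2√(ρ·log(1/δ))} · Pr[M(D′) ∈ S] + δ. -/
open scoped ENNReal

open Finset in
/-- Tail bound: the probability mass (under `P`) of the set where `P` exceeds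
`e^ε · Q` is at most `exp (B - (α-1)ε)`, given the Rényi-type bound `hB`. -/
lemma zCDP_aux_tail {R : Type*} [Fintype R] (P Q : R → ℝ)
    (hP : ∀ r, 0 ≤ P r) (hQ : ∀ r, 0 ≤ Q r) (habs : ∀ r, Q r = 0 → P r = 0)
    (α : ℝ) (hα : 1 < α) (B ε : ℝ) (hε : 0 ≤ ε)
    (hB : ∑ r, ENNReal.ofReal (P r) ^ α * ENNReal.ofReal (Q r) ^ (1 - α) ≤
      ENNReal.ofReal (Real.exp B)) :
    ∑ r ∈ univ.filter (fun r => Real.exp ε * Q r < P r), P r ≤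
      Real.exp (B - (α - 1) * ε) := by
  classical
  set A := univ.filter (fun r => Real.exp ε * Q r < P r) with hA
  have hcond : ∀ r ∈ A, Real.exp ε * Q r < P r := by
    intro r hr; exact (Finset.mem_filter.mp hr).2
  have hq : ∀ r ∈ A, 0 < Q r := by
    intro r hr
    rcases (hQ r).lt_or_eq with h | h
    · exact h
    · exfalso
      have hp0 := habs r h.symm
      have := hcond r hr
      rw [← h, hp0] at this
      simp at this
  have hp : ∀ r ∈ A, 0 < P r := by
    intro r hr
    have h0 : 0 ≤ Real.exp ε * Q r := mul_nonneg (Real.exp_pos ε).le (hQ r)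
    exact lt_of_le_of_lt h0 (hcond r hr)
  -- pointwise real bound
  have hpt : ∀ r ∈ A, P r * Real.exp ((α - 1) * ε) ≤ P r ^ α * Q r ^ (1 - α) := by
    intro r hr
    have hqr := hq r hr
    have hpr := hp r hr
    have hlog : ε ≤ Real.log (P r) - Real.log (Q r) := by
      have h1 : Real.exp ε < P r / Q r := (lt_div_iff₀ hqr).mpr (hcond r hr)
      have h2 : ε < Real.log (P r / Q r) :=
        (Real.lt_log_iff_exp_lt (by positivity)).mpr h1
      rw [Real.log_div hpr.ne' hqr.ne'] at h2
      linarith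
    calc P r * Real.exp ((α - 1) * ε)
        = Real.exp (Real.log (P r) + (α - 1) * ε) := by
          rw [Real.exp_add, Real.exp_log hpr]
      _ ≤ Real.exp (Real.log (P r) * α + Real.log (Q r) * (1 - α)) := by
          apply Real.exp_le_exp.mpr
          nlinarith [mul_le_mul_of_nonneg_left hlog (by linarith : (0:ℝ) ≤ α - 1)]
      _ = P r ^ α * Q r ^ (1 - α) := by
          rw [Real.exp_add, ← Real.rpow_def_of_pos hpr, ← Real.rpow_def_of_pos hqr]
  -- transfer the ENNReal bound to reals on A
  have hsumA : ∑ r ∈ A, P r ^ α * Q r ^ (1 - α) ≤ Real.exp B := by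
    have h1 : ENNReal.ofReal (∑ r ∈ A, P r ^ α * Q r ^ (1 - α)) ≤
        ENNReal.ofReal (Real.exp B) := by
      rw [ENNReal.ofReal_sum_of_nonneg (fun r hr =>
        mul_nonneg (Real.rpow_nonneg (hP r) α) (Real.rpow_nonneg (hQ r) (1 - α)))]
      refine le_trans (le_trans ?_ (Finset.sum_le_sum_of_subset (Finset.subset_univ A))) hB
      apply Finset.sum_le_sum
      intro r hr
      rw [ENNReal.ofReal_mul (Real.rpow_nonneg (hP r) α),
        ENNReal.ofReal_rpow_of_pos (hp r hr), ENNReal.ofReal_rpow_of_pos (hq r hr)]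
    exact (ENNReal.ofReal_le_ofReal_iff (Real.exp_pos B).le).mp h1
  have h2 : (∑ r ∈ A, P r) * Real.exp ((α - 1) * ε) ≤ Real.exp B := by
    rw [Finset.sum_mul]
    exact le_trans (Finset.sum_le_sum hpt) hsumA
  calc ∑ r ∈ A, P r ≤ Real.exp B / Real.exp ((α - 1) * ε) :=
        (le_div_iff₀ (Real.exp_pos _)).mpr h2
    _ = Real.exp (B - (α - 1) * ε) := (Real.exp_sub _ _).symm

/-- (zCDP implies approximate DP, Bun–Steinke.)
If `M` satisfies `ρ`-zCDP — i.e. for all neighboring datasets and all `α > 1`,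
`D_α(M(D) ‖ M(D′)) ≤ ρα`, encoded as
`Σ_r M(D)(r)^α · M(D′)(r)^{1−α} ≤ exp((α−1)·ρα)` with the sum computed in `ℝ≥0∞`
(so that the divergence is infinite when absolute continuity fails) —
then for every `δ ∈ (0,1)`, `M` is `(ρ + 2√(ρ·log(1/δ)), δ)`-differentially private. -/
theorem zCDP_implies_approxDP
    {X R : Type*} [Fintype X] [Fintype R]
    (n : ℕ) (hn : 1 ≤ n) (ρ : ℝ) (hρ : 0 ≤ ρ) (δ : ℝ) (hδ : δ ∈ Set.Ioo (0 : ℝ) 1)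
    (M : (Fin n → X) → R → ℝ)
    (hM0 : ∀ D r, 0 ≤ M D r) (hM1 : ∀ D, ∑ r, M D r = 1)
    -- `ρ`-zCDP: `D_α(M(D) ‖ M(D′)) ≤ ρ·α` for all neighboring `D, D′` and all `α > 1`
    (hzCDP : ∀ D D' : Fin n → X, (∃ i, ∀ j, j ≠ i → D j = D' j) →
      ∀ α : ℝ, 1 < α →
        ∑ r, ENNReal.ofReal (M D r) ^ α * ENNReal.ofReal (M D' r) ^ (1 - α) ≤
          ENNReal.ofReal (Real.exp ((α - 1) * (ρ * α)))) :
    -- `(ρ + 2√(ρ·log(1/δ)), δ)`-differential privacy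
    ∀ D D' : Fin n → X, (∃ i, ∀ j, j ≠ i → D j = D' j) →
      ∀ S : Finset R,
        ∑ r ∈ S, M D r ≤
          Real.exp (ρ + 2 * Real.sqrt (ρ * Real.log (1 / δ))) * ∑ r ∈ S, M D' r + δ := by
  classical
  obtain ⟨hδ0, hδ1⟩ := hδ
  intro D D' hne S
  set L := Real.log (1 / δ) with hLdef
  have hL0 : 0 < L := Real.log_pos (by rw [lt_div_iff₀ hδ0]; linarith)
  set ε := ρ + 2 * Real.sqrt (ρ * L) with hεdef
  have hε0 : 0 ≤ ε := add_nonneg hρ (by positivity)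
  -- absolute continuity
  have habs : ∀ r, M D' r = 0 → M D r = 0 := by
    intro r hq0
    by_contra hp0
    have hp : 0 < M D r := (hM0 D r).lt_of_ne (Ne.symm hp0)
    have h := hzCDP D D' hne 2 one_lt_two
    have hterm : ENNReal.ofReal (M D r) ^ (2:ℝ) * ENNReal.ofReal (M D' r) ^ (1 - (2:ℝ)) = ⊤ := by
      rw [hq0, ENNReal.ofReal_zero, ENNReal.zero_rpow_of_neg (by norm_num)]
      exact ENNReal.mul_top
        (ENNReal.rpow_pos (ENNReal.ofReal_pos.mpr hp) ENNReal.ofReal_ne_top).ne'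
    have hle : (⊤ : ℝ≥0∞) ≤ ENNReal.ofReal (Real.exp ((2 - 1) * (ρ * 2))) := by
      calc (⊤ : ℝ≥0∞) = ENNReal.ofReal (M D r) ^ (2:ℝ) * ENNReal.ofReal (M D' r) ^ (1 - (2:ℝ)) :=
            hterm.symm
        _ ≤ ∑ r', ENNReal.ofReal (M D r') ^ (2:ℝ) * ENNReal.ofReal (M D' r') ^ (1 - (2:ℝ)) :=
            Finset.single_le_sum
              (f := fun r' => ENNReal.ofReal (M D r') ^ (2:ℝ) * ENNReal.ofReal (M D' r') ^ (1 - (2:ℝ)))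
              (fun i _ => zero_le) (Finset.mem_univ r)
        _ ≤ _ := h
    exact ENNReal.ofReal_ne_top (top_le_iff.mp hle)
  set A := Finset.univ.filter (fun r => Real.exp ε * M D' r < M D r) with hAdef
  -- the bad set has mass at most δ
  have hPA : ∑ r ∈ A, M D r ≤ δ := by
    rcases hρ.eq_or_lt with hρ0 | hρpos
    · -- ρ = 0
      have hε_eq : ε = 0 := by rw [hεdef, ← hρ0]; simp
      have hAempty : A = ∅ := by
        rw [hAdef, Finset.filter_eq_empty_iff]
        intro r _
        intro hlt
        have hq : 0 < M D' r := by
          rcases (hM0 D' r).lt_or_eq with h | h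
          · exact h
          · exfalso
            have hp0 := habs r h.symm
            rw [← h, hp0] at hlt
            simp at hlt
        have hp : 0 < M D r :=
          lt_of_le_of_lt (mul_nonneg (Real.exp_pos ε).le (hM0 D' r)) hlt
        have hp1 : M D r ≤ 1 := by
          rw [← hM1 D]
          exact Finset.single_le_sum (fun i _ => hM0 D i) (Finset.mem_univ r)
        have hqp : M D' r < M D r := by rwa [hε_eq, Real.exp_zero, one_mul] at hlt
        set ε' := (Real.log (M D r) - Real.log (M D' r)) / 2 with hε'def
        have hε'pos : 0 < ε' := by
          have := Real.log_lt_log hq hqp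
          rw [hε'def]; linarith
        set α := 1 + ((- Real.log (M D r)) + 1) / ε' with hα'def
        have hlognn : 0 ≤ -Real.log (M D r) := by
          have := Real.log_nonpos hp.le hp1
          linarith
        have hαgt : 1 < α := by
          have : 0 < ((-Real.log (M D r)) + 1) / ε' := div_pos (by linarith) hε'pos
          rw [hα'def]; linarith
        have hbar := zCDP_aux_tail (M D) (M D') (hM0 D) (hM0 D') habs α hαgt
          ((α - 1) * (ρ * α)) ε' hε'pos.le (hzCDP D D' hne α hαgt)
        have hr_mem : r ∈ Finset.univ.filter (fun r => Real.exp ε' * M D' r < M D r) := by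
          rw [Finset.mem_filter]
          refine ⟨Finset.mem_univ r, ?_⟩
          have h1 : ε' < Real.log (M D r) - Real.log (M D' r) := by
            rw [hε'def]; linarith
          have h2 : Real.exp ε' < M D r / M D' r := by
            calc Real.exp ε' < Real.exp (Real.log (M D r) - Real.log (M D' r)) :=
                  Real.exp_lt_exp.mpr h1
              _ = M D r / M D' r := by
                  rw [Real.exp_sub, Real.exp_log hp, Real.exp_log hq]
          exact (lt_div_iff₀ hq).mp h2
        have hPr : M D r ≤ Real.exp ((α - 1) * (ρ * α) - (α - 1) * ε') :=
          le_trans (Finset.single_le_sum (fun i _ => hM0 D i) hr_mem) hbar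
        have hrhs : (α - 1) * (ρ * α) - (α - 1) * ε' = Real.log (M D r) - 1 := by
          have hα1 : α - 1 = ((-Real.log (M D r)) + 1) / ε' := by rw [hα'def]; ring
          rw [← hρ0, hα1]
          field_simp
          ring
        rw [hrhs] at hPr
        have hcontra : Real.exp (Real.log (M D r) - 1) < M D r := by
          rw [Real.exp_sub, Real.exp_log hp]
          exact div_lt_self hp (by linarith [Real.exp_one_gt_d9])
        linarith
      rw [hAempty]
      simpa using hδ0.le
    · -- ρ > 0
      set s := Real.sqrt (L / ρ) with hsdef
      have hs0 : 0 ≤ s := Real.sqrt_nonneg _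
      have hs2 : ρ * (s * s) = L := by
        rw [hsdef, Real.mul_self_sqrt (by positivity)]
        field_simp
      have hsqrt : Real.sqrt (ρ * L) = ρ * s := by
        have h : ρ * L = (ρ * s) ^ 2 := by nlinarith [hs2]
        rw [h, Real.sqrt_sq (by positivity)]
      set α := 1 + s with hαdef
      have hspos : 0 < s := by
        rcases hs0.lt_or_eq with h | h
        · exact h
        · exfalso; rw [← h] at hs2; simp at hs2; linarith
      have hαgt : 1 < α := by rw [hαdef]; linarith
      have hbar := zCDP_aux_tail (M D) (M D') (hM0 D) (hM0 D') habs α hαgt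
        ((α - 1) * (ρ * α)) ε hε0 (hzCDP D D' hne α hαgt)
      refine le_trans hbar ?_
      have hexp : (α - 1) * (ρ * α) - (α - 1) * ε = -L := by
        rw [hαdef, hεdef, hsqrt]
        linear_combination -hs2
      rw [hexp]
      have : Real.exp (-L) = δ := by
        rw [hLdef, one_div, Real.log_inv, neg_neg, Real.exp_log hδ0]
      rw [this]
  -- finish
  calc ∑ r ∈ S, M D r
      = ∑ r ∈ S ∩ A, M D r + ∑ r ∈ S \ A, M D r :=
        (Finset.sum_inter_add_sum_sdiff S A _).symm
    _ ≤ ∑ r ∈ A, M D r + ∑ r ∈ S \ A, Real.exp ε * M D' r := by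
        apply add_le_add
        · exact Finset.sum_le_sum_of_subset_of_nonneg Finset.inter_subset_right
            (fun i _ _ => hM0 D i)
        · apply Finset.sum_le_sum
          intro r hr
          have hnA : r ∉ A := (Finset.mem_sdiff.mp hr).2
          have : ¬ (Real.exp ε * M D' r < M D r) := by
            intro hc
            exact hnA (by rw [hAdef, Finset.mem_filter]; exact ⟨Finset.mem_univ r, hc⟩)
          linarith [not_lt.mp this]
    _ ≤ δ + Real.exp ε * ∑ r ∈ S, M D' r := by
        rw [← Finset.mul_sum]
        apply add_le_add hPA
        apply mul_le_mul_of_nonneg_left ?_ (Real.exp_pos ε).le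
        exact Finset.sum_le_sum_of_subset_of_nonneg Finset.sdiff_subset
          (fun i _ _ => hM0 D' i)
    _ = Real.exp ε * ∑ r ∈ S, M D' r + δ := add_comm _ _
end
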